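/- Let $V_{k+1} = [V_k, W]$ with orthonormal columns extending $V_k$, let $\check Y_{k+1} = \begin{bmatrix} Y_k & 0 \\ 0 & 0 \end{bmatrix}$, and $X_k = V_k Y_k V_k^*$. Then the residual of $\check Y_{k+1}$ with respect to the reduced Riccati equation at level $k+1$, $\rho_k = T_{k+1}^* \check Y_{k+1} + \check Y_{k+1} T_{k+1} - \check Y_{k+1} B_{k+1} B_{k+1}^* \check Y_{k+1} + C_{k+1}^* C_{k+1}$, equals $V_{k+1}^* R_k V_{k+1}$ where $R_k = A^* X_k + X_k A - X_k B B^* X_k + C^* C$; consequently $\|\rho_k\| \le \|R_k\|$. -/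

import Mathlib

open Matrix

noncomputable def opNorm {m n : Type*} [Fintype m] [Fintype n] [DecidableEq n]
    (A : Matrix m n ℂ) : ℝ :=
  ‖(Matrix.toEuclideanLin A).toContinuousLinearMap‖

section aux
open scoped Matrix.Norms.L2Operator

lemma opNorm_eq {m n : Type*} [Fintype m] [Fintype n] [DecidableEq n]
    (A : Matrix m n ℂ) : opNorm A = ‖A‖ := rfl

lemma norm_le_one_of_iso {m n : Type*} [Fintype m] [Fintype n] [DecidableEq n]
    (U : Matrix m n ℂ) (h : Uᴴ * U = 1) : ‖U‖ ≤ 1 := by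
  have h1 : ‖U‖ * ‖U‖ = ‖(1 : Matrix n n ℂ)‖ := by
    rw [← Matrix.l2_opNorm_conjTranspose_mul_self, h]
  have h2 : ‖(1 : Matrix n n ℂ)‖ ≤ 1 := by
    have := Matrix.l2_opNorm_conjTranspose_mul_self (1 : Matrix n n ℂ)
    simp only [Matrix.conjTranspose_one, mul_one] at this
    nlinarith [norm_nonneg (1 : Matrix n n ℂ)]
  nlinarith [norm_nonneg U]

lemma opNorm_conj_le {m n : Type*} [Fintype m] [Fintype n] [DecidableEq m] [DecidableEq n]
    (U : Matrix m n ℂ) (M : Matrix m m ℂ) (h : Uᴴ * U = 1) :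
    opNorm (Uᴴ * M * U) ≤ opNorm M := by
  rw [opNorm_eq, opNorm_eq]
  have hU : ‖U‖ ≤ 1 := norm_le_one_of_iso U h
  have hUc : ‖Uᴴ‖ ≤ 1 := by rw [Matrix.l2_opNorm_conjTranspose]; exact hU
  calc ‖Uᴴ * M * U‖ ≤ ‖Uᴴ * M‖ * ‖U‖ := Matrix.l2_opNorm_mul _ _
    _ ≤ (‖Uᴴ‖ * ‖M‖) * ‖U‖ :=
        mul_le_mul_of_nonneg_right (Matrix.l2_opNorm_mul _ _) (norm_nonneg U)
    _ ≤ ‖M‖ * 1 := by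
        refine mul_le_mul ?_ hU (norm_nonneg U) (norm_nonneg M)
        exact mul_le_of_le_one_left (norm_nonneg M) hUc
    _ = ‖M‖ := mul_one _

lemma toBlocks₁₁_one {l m α : Type*} [DecidableEq l] [DecidableEq m] [Zero α] [One α] :
    Matrix.toBlocks₁₁ (1 : Matrix (l ⊕ m) (l ⊕ m) α) = 1 := by
  ext i j; simp [Matrix.toBlocks₁₁, Matrix.one_apply]

lemma toBlocks₁₂_one {l m α : Type*} [DecidableEq l] [DecidableEq m] [Zero α] [One α] :
    Matrix.toBlocks₁₂ (1 : Matrix (l ⊕ m) (l ⊕ m) α) = 0 := by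
  ext i j; simp [Matrix.toBlocks₁₂, Matrix.one_apply]

lemma toBlocks₂₁_one {l m α : Type*} [DecidableEq l] [DecidableEq m] [Zero α] [One α] :
    Matrix.toBlocks₂₁ (1 : Matrix (l ⊕ m) (l ⊕ m) α) = 0 := by
  ext i j; simp [Matrix.toBlocks₂₁, Matrix.one_apply]

end aux

theorem nested_residual (n p q d d' : ℕ)
    (A : Matrix (Fin n) (Fin n) ℂ) (B : Matrix (Fin n) (Fin q) ℂ)
    (C : Matrix (Fin p) (Fin n) ℂ)
    (V : Matrix (Fin n) (Fin d) ℂ) (W : Matrix (Fin n) (Fin d') ℂ)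
    (Y : Matrix (Fin d) (Fin d) ℂ)
    (hV1 : (Matrix.fromCols V W)ᴴ * (Matrix.fromCols V W) = 1) :
    ((Matrix.fromCols V W)ᴴ * A * (Matrix.fromCols V W))ᴴ * (Matrix.fromBlocks Y 0 0 0)
      + (Matrix.fromBlocks Y 0 0 0) * ((Matrix.fromCols V W)ᴴ * A * (Matrix.fromCols V W))
      - (Matrix.fromBlocks Y 0 0 0 : Matrix (Fin d ⊕ Fin d') (Fin d ⊕ Fin d') ℂ) * ((Matrix.fromCols V W)ᴴ * B)
          * ((Matrix.fromCols V W)ᴴ * B)ᴴ * (Matrix.fromBlocks Y 0 0 0)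
      + (C * Matrix.fromCols V W)ᴴ * (C * Matrix.fromCols V W)
    = (Matrix.fromCols V W)ᴴ
        * (Aᴴ * (V * Y * Vᴴ) + (V * Y * Vᴴ) * A
            - (V * Y * Vᴴ) * B * Bᴴ * (V * Y * Vᴴ) + Cᴴ * C)
        * (Matrix.fromCols V W)
    ∧ opNorm (((Matrix.fromCols V W)ᴴ * A * (Matrix.fromCols V W))ᴴ * (Matrix.fromBlocks Y 0 0 0)
        + (Matrix.fromBlocks Y 0 0 0) * ((Matrix.fromCols V W)ᴴ * A * (Matrix.fromCols V W))
        - (Matrix.fromBlocks Y 0 0 0 : Matrix (Fin d ⊕ Fin d') (Fin d ⊕ Fin d') ℂ) * ((Matrix.fromCols V W)ᴴ * B)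
            * ((Matrix.fromCols V W)ᴴ * B)ᴴ * (Matrix.fromBlocks Y 0 0 0)
        + (C * Matrix.fromCols V W)ᴴ * (C * Matrix.fromCols V W))
      ≤ opNorm (Aᴴ * (V * Y * Vᴴ) + (V * Y * Vᴴ) * A
            - (V * Y * Vᴴ) * B * Bᴴ * (V * Y * Vᴴ) + Cᴴ * C) := by
  have hblocks : Vᴴ * V = 1 ∧ Vᴴ * W = 0 ∧ Wᴴ * V = 0 := by
    have h' : Matrix.fromRows Vᴴ Wᴴ * Matrix.fromCols V W = 1 := by
      rw [← Matrix.conjTranspose_fromCols_eq_fromRows_conjTranspose]; exact hV1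
    rw [Matrix.fromRows_mul_fromCols] at h'
    have h11 := congrArg (fun M => M.toBlocks₁₁) h'
    have h12 := congrArg (fun M => M.toBlocks₁₂) h'
    have h21 := congrArg (fun M => M.toBlocks₂₁) h'
    simp only [Matrix.toBlocks_fromBlocks₁₁, Matrix.toBlocks_fromBlocks₁₂,
      Matrix.toBlocks_fromBlocks₂₁, toBlocks₁₁_one, toBlocks₁₂_one, toBlocks₂₁_one] at h11 h12 h21
    exact ⟨h11, h12, h21⟩
  obtain ⟨hVV, hVW, hWV⟩ := hblocks
  set U := Matrix.fromCols V W with hUdef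
  set X := V * Y * Vᴴ with hXdef
  set Z := Matrix.fromBlocks Y (0 : Matrix (Fin d) (Fin d') ℂ)
      (0 : Matrix (Fin d') (Fin d) ℂ) (0 : Matrix (Fin d') (Fin d') ℂ) with hZdef
  have key1 : U * Z = X * U := by
    rw [hUdef, hXdef, hZdef, Matrix.fromCols_mul_fromBlocks, Matrix.mul_fromCols]
    simp [Matrix.mul_assoc, hVV, hVW]
  have key2 : Z * Uᴴ = Uᴴ * X := by
    rw [hUdef, hXdef, Matrix.conjTranspose_fromCols_eq_fromRows_conjTranspose,
      Matrix.fromBlocks_mul_fromRows, Matrix.fromRows_mul]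
    have hW0 : Wᴴ * (V * Y * Vᴴ) = 0 := by
      rw [show V * Y * Vᴴ = V * (Y * Vᴴ) from Matrix.mul_assoc _ _ _, ← Matrix.mul_assoc, hWV,
        Matrix.zero_mul]
    have hV0 : Vᴴ * (V * Y * Vᴴ) = Y * Vᴴ := by
      rw [show V * Y * Vᴴ = V * (Y * Vᴴ) from Matrix.mul_assoc _ _ _, ← Matrix.mul_assoc, hVV,
        Matrix.one_mul]
    simp [hW0, hV0]
  have e1 : (Uᴴ * A * U)ᴴ * Z = Uᴴ * (Aᴴ * X) * U := by
    have h : (Uᴴ * A * U)ᴴ * Z = Uᴴ * Aᴴ * (U * Z) := by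
      simp [Matrix.conjTranspose_mul, Matrix.mul_assoc]
    rw [h, key1]
    simp [Matrix.mul_assoc]
  have e2 : Z * (Uᴴ * A * U) = Uᴴ * (X * A) * U := by
    have h : Z * (Uᴴ * A * U) = (Z * Uᴴ) * (A * U) := by
      simp [Matrix.mul_assoc]
    rw [h, key2]
    simp [Matrix.mul_assoc]
  have e3 : Z * (Uᴴ * B) * (Uᴴ * B)ᴴ * Z = Uᴴ * (X * B * Bᴴ * X) * U := by
    have h : Z * (Uᴴ * B) * (Uᴴ * B)ᴴ * Z = (Z * Uᴴ) * (B * (Bᴴ * (U * Z))) := by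
      simp [Matrix.conjTranspose_mul, Matrix.mul_assoc]
    rw [h, key1, key2]
    simp [Matrix.mul_assoc]
  have e4 : (C * U)ᴴ * (C * U) = Uᴴ * (Cᴴ * C) * U := by
    simp [Matrix.conjTranspose_mul, Matrix.mul_assoc]
  have main : (Uᴴ * A * U)ᴴ * Z + Z * (Uᴴ * A * U) - Z * (Uᴴ * B) * (Uᴴ * B)ᴴ * Z
      + (C * U)ᴴ * (C * U)
      = Uᴴ * (Aᴴ * X + X * A - X * B * Bᴴ * X + Cᴴ * C) * U := by
    rw [e1, e2, e3, e4]
    simp only [Matrix.mul_add, Matrix.add_mul, Matrix.mul_sub, Matrix.sub_mul]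
  exact ⟨main, main ▸ opNorm_conj_le U _ hV1⟩
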